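/- Let E be a complex Hilbert space, A : E →L[ℂ] E a positive operator (self-adjoint with re⟪A z, z⟫ ≥ 0 for all z), and M : E →L[ℂ] E an orthogonal projection (idempotent and self-adjoint). Let y, x ∈ E satisfy M x = y and (id − M)(A x) = 0. Then for every z ∈ E with M z = y, re⟪A x, x⟫ ≤ re⟪A z, z⟫; i.e., x is a global minimizer of the quadratic form z ↦ re⟪A z, z⟫ over the affine set {z : M z = y}. -/

import Mathlib

open RCLike

/-- If `A` is a positive operator, `M` an orthogonal projection,
`M x = y` and `(id − M)(A x) = 0`, then `x` minimizes the quadratic form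
`z ↦ re⟪A z, z⟫` over the affine set `{z : M z = y}`. -/
theorem stmt_6 {E : Type*} [NormedAddCommGroup E] [InnerProductSpace ℂ E]
    [CompleteSpace E] (A M : E →L[ℂ] E)
    (hA : A.IsPositive)
    (hMM : M.comp M = M) (hMsa : IsSelfAdjoint M)
    (y x : E) (hMx : M x = y)
    (hstat : (ContinuousLinearMap.id ℂ E - M) (A x) = 0) :
    ∀ z : E, M z = y →
      re (inner ℂ (A x) x : ℂ) ≤ re (inner ℂ (A z) z : ℂ) := by
  intro z hMz
  set d := z - x with hd
  have hMd : M d = 0 := by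
    simp [hd, map_sub, hMz, hMx]
  have hAxM : M (A x) = A x := by
    have := hstat
    simp only [ContinuousLinearMap.sub_apply, ContinuousLinearMap.id_apply] at this
    exact (sub_eq_zero.mp this).symm
  -- cross term vanishes
  have hcross : (inner ℂ (A x) d : ℂ) = 0 := by
    calc (inner ℂ (A x) d : ℂ) = inner ℂ (M (A x)) d := by rw [hAxM]
      _ = inner ℂ (A x) (M d) := by
          rw [← ContinuousLinearMap.adjoint_inner_left, hMsa.adjoint_eq]
      _ = 0 := by rw [hMd, inner_zero_right]
  have hAsa : IsSelfAdjoint A := hA.isSelfAdjoint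
  have hcross' : (inner ℂ (A d) x : ℂ) = 0 := by
    calc (inner ℂ (A d) x : ℂ) = inner ℂ d (A x) := by
          rw [← ContinuousLinearMap.adjoint_inner_left, hAsa.adjoint_eq]
      _ = (starRingEnd ℂ) (inner ℂ (A x) d : ℂ) := (inner_conj_symm _ _).symm
      _ = 0 := by rw [hcross, map_zero]
  have hz : z = x + d := by simp [hd]
  have hexp : (inner ℂ (A z) z : ℂ) =
      inner ℂ (A x) x + inner ℂ (A x) d + inner ℂ (A d) x + inner ℂ (A d) d := by
    rw [hz]
    simp [map_add, inner_add_left, inner_add_right]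
    ring
  have hpos : 0 ≤ re (inner ℂ (A d) d : ℂ) := hA.2 d
  have heq : re (inner ℂ (A z) z : ℂ) =
      re (inner ℂ (A x) x : ℂ) + re (inner ℂ (A d) d : ℂ) := by
    rw [hexp]
    simp only [hcross, hcross', add_zero, map_add, map_zero]
  rw [heq]
  linarith
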